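/- Every nontrivial normal subgroup of the lamplighter group L₁ = (ℤ/pℤ) ≀ ℤ intersects the base group A₁ = ⊕_ℤ(ℤ/pℤ) in a subgroup of finite index in A₁; in particular every nontrivial normal subgroup of L₁ is infinite. -/

import Mathlib

open Finsupp Multiplicative

/-- The base group of the lamplighter group `L_n = (ℤ/pℤ)^n ≀ ℤ`: `⊕_ℤ (ℤ/pℤ)^n`. -/
abbrev LampBase (p n : ℕ) := ℤ →₀ (Fin n → ZMod p)

/-- The shift `x^s` on the base group. -/
def lampShift (p n : ℕ) (s : ℤ) : LampBase p n ≃+ LampBase p n :=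
  Finsupp.domCongr (Equiv.addRight s)

/-- The shift action of `ℤ` on the (multiplicative) base group. -/
noncomputable def lampAct (p n : ℕ) :
    Multiplicative ℤ →* MulAut (Multiplicative (LampBase p n)) where
  toFun s := AddEquiv.toMultiplicative (lampShift p n s.toAdd)
  map_one' := by
    ext w
    simp [lampShift, Finsupp.domCongr_apply]
    rfl
  map_mul' s t := by
    ext w
    simp [lampShift, Finsupp.domCongr_apply, MulAut.mul_def, MulEquiv.trans_apply]
    try simp [Finsupp.equivMapDomain_apply, Equiv.Perm.mul_def]
    try ring_nf

/-- The lamplighter group `L_n = (ℤ/pℤ)^n ≀ ℤ`, realized as the semidirect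
product of the base group `⊕_ℤ (ℤ/pℤ)^n` with `ℤ` acting by the shift. -/
abbrev Lamp (p n : ℕ) :=
  SemidirectProduct (Multiplicative (LampBase p n)) (Multiplicative ℤ) (lampAct p n)

lemma lampShift_apply' (p n : ℕ) (s : ℤ) (a : LampBase p n) (k : ℤ) :
    (lampShift p n s a) k = a (k - s) := by
  simp [lampShift, Finsupp.domCongr_apply, Finsupp.equivMapDomain_apply, sub_eq_add_neg]

lemma conj_comm_inl' {N G : Type*} [CommGroup N] [Group G] {φ : G →* MulAut N}
    (x : N) (v : N ⋊[φ] G) :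
    SemidirectProduct.inl x * v * (SemidirectProduct.inl x)⁻¹ * v⁻¹
      = SemidirectProduct.inl (x * (φ v.right x)⁻¹) := by
  ext
  · simp [SemidirectProduct.mul_left, SemidirectProduct.inv_left]
    rw [mul_right_comm x v.left, mul_inv_cancel_right]
  · simp

lemma fin1_ne_zero_iff' {p : ℕ} (x : Fin 1 → ZMod p) : x ≠ 0 ↔ x 0 ≠ 0 := by
  constructor
  · intro h h0
    exact h (funext fun i => by rw [Subsingleton.elim i 0]; exact h0)
  · intro h h0
    exact h (by rw [h0]; rfl)

/-- Every nontrivial normal subgroup of `L₁ = (ℤ/pℤ) ≀ ℤ` meets the base group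
in a finite-index subgroup of the base group; in particular it is infinite. -/
theorem stmt_10 (p : ℕ) [Fact p.Prime]
    (V : Subgroup (Lamp p 1)) [V.Normal] (hV : V ≠ ⊥) :
    (Subgroup.comap (SemidirectProduct.inl
        (φ := lampAct p 1)) V).FiniteIndex ∧
      (V : Set (Lamp p 1)).Infinite := by
  classical
  set W := Subgroup.comap (SemidirectProduct.inl (φ := lampAct p 1)) V with hWdef
  have hnormal : V.Normal := ‹V.Normal›
  -- multiplicative/additive dictionary
  have hofAdd_mul : ∀ a b : LampBase p 1, ofAdd (a + b) = ofAdd a * ofAdd b := fun _ _ => rfl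
  -- shift closure of W
  have hshift : ∀ (s : ℤ) (a : LampBase p 1),
      ofAdd a ∈ W → ofAdd (lampShift p 1 s a) ∈ W := by
    intro s a ha
    have h2 : SemidirectProduct.inr (φ := lampAct p 1) (ofAdd s) *
        SemidirectProduct.inl (ofAdd a) * (SemidirectProduct.inr (ofAdd s))⁻¹ ∈ V :=
      hnormal.conj_mem _ (Subgroup.mem_comap.mp ha) _
    rw [← map_inv, ← SemidirectProduct.inl_aut] at h2
    exact Subgroup.mem_comap.mpr h2
  -- scalar closure of W
  have hsmul : ∀ (c : ZMod p) (a : LampBase p 1), ofAdd a ∈ W → ofAdd (c • a) ∈ W := by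
    intro c a ha
    have h1 : c • a = c.val • a := by
      conv_lhs => rw [show c = ((c.val : ℕ) : ZMod p) by simp]
      rw [Nat.cast_smul_eq_nsmul]
    rw [h1]
    have h2 : ofAdd (c.val • a) = (ofAdd a) ^ c.val := by
      rw [ofAdd_nsmul]
    rw [h2]
    exact pow_mem ha _
  -- a nonzero element of W
  obtain ⟨w₀, hw₀ne, hw₀W⟩ : ∃ w₀ : LampBase p 1, w₀ ≠ 0 ∧ ofAdd w₀ ∈ W := by
    obtain ⟨v, hvV, hvne⟩ : ∃ v, v ∈ V ∧ v ≠ 1 := by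
      rcases V.bot_or_exists_ne_one with h | ⟨v, h1, h2⟩
      · exact absurd h hV
      · exact ⟨v, h1, h2⟩
    set e : Fin 1 → ZMod p := fun _ => 1 with he
    have hene : e ≠ 0 := by
      rw [fin1_ne_zero_iff']
      exact one_ne_zero
    by_cases hs : v.right = 1
    · refine ⟨toAdd v.left, ?_, ?_⟩
      · intro h0
        apply hvne
        have : v.left = 1 := by
          have := congrArg (ofAdd) h0
          simpa using this
        rw [← SemidirectProduct.inl_left_mul_inr_right v, this, hs]
        simp
      · have : SemidirectProduct.inl (φ := lampAct p 1) v.left = v := by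
          rw [← SemidirectProduct.inl_left_mul_inr_right v, hs]
          simp
        exact Subgroup.mem_comap.mpr (by rw [show ofAdd (toAdd v.left) = v.left from rfl, this]; exact hvV)
    · set s : ℤ := toAdd v.right with hsdef
      have hsne : s ≠ 0 := fun h => hs (by
        have : v.right = ofAdd (0:ℤ) := by rw [← h]; rfl
        simpa using this)
      set x : LampBase p 1 := Finsupp.single 0 e with hx
      refine ⟨x - lampShift p 1 s x, ?_, ?_⟩
      · intro h0
        have h1 : (x - lampShift p 1 s x) 0 = 0 := by rw [h0]; rfl
        rw [Finsupp.sub_apply, lampShift_apply'] at h1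
        rw [hx] at h1
        rw [Finsupp.single_eq_same, Finsupp.single_eq_of_ne' (by omega : (0:ℤ) ≠ 0 - s)] at h1
        simp at h1
        exact hene h1
      · have hc : SemidirectProduct.inl (φ := lampAct p 1) (ofAdd x) * v *
            (SemidirectProduct.inl (ofAdd x))⁻¹ * v⁻¹ ∈ V :=
          V.mul_mem (hnormal.conj_mem v hvV (SemidirectProduct.inl (ofAdd x))) (V.inv_mem hvV)
        rw [conj_comm_inl'] at hc
        have key : ofAdd x * ((lampAct p 1 v.right) (ofAdd x))⁻¹
            = ofAdd (x - lampShift p 1 s x) := by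
          have : (lampAct p 1 v.right) (ofAdd x) = ofAdd (lampShift p 1 s x) := rfl
          rw [this, ← ofAdd_neg, ← ofAdd_add, ← sub_eq_add_neg]
        rw [key] at hc
        exact Subgroup.mem_comap.mpr hc
  -- normalize w₀ to w supported in [0, d] with nonzero ends
  have hsupp_ne : w₀.support.Nonempty := Finsupp.support_nonempty_iff.mpr hw₀ne
  set m : ℤ := w₀.support.min' hsupp_ne with hm
  set M : ℤ := w₀.support.max' hsupp_ne with hM
  set d : ℤ := M - m with hd
  set w : LampBase p 1 := lampShift p 1 (-m) w₀ with hw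
  have hwW : ofAdd w ∈ W := hshift _ _ hw₀W
  have hwval : ∀ j, w j = w₀ (j + m) := by
    intro j; rw [hw, lampShift_apply', sub_neg_eq_add]
  have hw0 : w 0 ≠ 0 := by
    rw [hwval, zero_add]
    exact Finsupp.mem_support_iff.mp (w₀.support.min'_mem hsupp_ne)
  have hwd : w d ≠ 0 := by
    rw [hwval, hd, sub_add_cancel]
    exact Finsupp.mem_support_iff.mp (w₀.support.max'_mem hsupp_ne)
  have hwsupp : ∀ j, w j ≠ 0 → 0 ≤ j ∧ j ≤ d := by
    intro j hj
    rw [hwval] at hj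
    have hj2 := Finsupp.mem_support_iff.mpr hj
    have h1 := w₀.support.min'_le _ hj2
    have h2 := w₀.support.le_max' _ hj2
    omega
  have hd0 : 0 ≤ d := (hwsupp d hwd).1
  -- killing one coefficient
  have kill : ∀ (t : ℤ), w t ≠ 0 → ∀ (a : LampBase p 1) (k0 : ℤ),
      ∃ v : LampBase p 1, ofAdd v ∈ W ∧ (a - v) k0 = 0 ∧
        ∀ j, (a - v) j ≠ 0 → a j ≠ 0 ∨ (k0 - t ≤ j ∧ j ≤ k0 - t + d) := by
    intro t hwt a k0
    have hwt0 : w t 0 ≠ 0 := (fin1_ne_zero_iff' _).mp hwt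
    set c : ZMod p := a k0 0 * (w t 0)⁻¹ with hc
    refine ⟨c • lampShift p 1 (k0 - t) w, hsmul c _ (hshift _ _ hwW), ?_, ?_⟩
    · rw [Finsupp.sub_apply, Finsupp.smul_apply, lampShift_apply',
        show k0 - (k0 - t) = t by ring]
      funext i
      rw [Subsingleton.elim i 0]
      simp only [Pi.sub_apply, Pi.smul_apply, smul_eq_mul, Pi.zero_apply]
      rw [hc, mul_assoc, inv_mul_cancel₀ hwt0, mul_one, sub_self]
    · intro j hj
      by_cases haj : a j = 0
      · right
        have hvj : (c • lampShift p 1 (k0 - t) w) j ≠ 0 := by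
          intro h0
          apply hj
          rw [Finsupp.sub_apply, haj, h0, sub_zero]
        rw [Finsupp.smul_apply] at hvj
        have hws : w (j - (k0 - t)) ≠ 0 := by
          intro h0
          apply hvj
          rw [lampShift_apply', h0, smul_zero]
        have := hwsupp _ hws
        omega
      · exact Or.inl haj
  -- push support below d
  have reduceTop : ∀ (n : ℕ) (a : LampBase p 1), (∀ k, a k ≠ 0 → k < d + n) →
      ∃ v, ofAdd v ∈ W ∧ ∀ k, (a - v) k ≠ 0 → k < d := by
    intro n
    induction n with
    | zero =>
      intro a ha
      refine ⟨0, by rw [show ofAdd (0 : LampBase p 1) = 1 from rfl]; exact W.one_mem, ?_⟩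
      intro k hk
      rw [sub_zero] at hk
      have := ha k hk
      omega
    | succ n ih =>
      intro a ha
      obtain ⟨v1, hv1W, hk0, hrest⟩ := kill d hwd a (d + n)
      have hbnd : ∀ k, (a - v1) k ≠ 0 → k < d + (n:ℤ) := by
        intro k hk
        have hkne : k ≠ d + n := fun h => hk (h ▸ hk0)
        rcases hrest k hk with h | h
        · have := ha k h
          push_cast at this ⊢
          omega
        · omega
      obtain ⟨v2, hv2W, hfin⟩ := ih (a - v1) hbnd
      refine ⟨v1 + v2, ?_, ?_⟩
      · rw [hofAdd_mul]; exact W.mul_mem hv1W hv2W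
      · intro k hk
        rw [← sub_sub] at hk
        exact hfin k hk
  -- push support into [0, d)
  have reduceBot : ∀ (n : ℕ) (a : LampBase p 1),
      (∀ k, a k ≠ 0 → -(n:ℤ) ≤ k ∧ k < d) →
      ∃ v, ofAdd v ∈ W ∧ ∀ k, (a - v) k ≠ 0 → 0 ≤ k ∧ k < d := by
    intro n
    induction n with
    | zero =>
      intro a ha
      refine ⟨0, by rw [show ofAdd (0 : LampBase p 1) = 1 from rfl]; exact W.one_mem, ?_⟩
      intro k hk
      rw [sub_zero] at hk
      have := ha k hk
      omega
    | succ n ih =>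
      intro a ha
      obtain ⟨v1, hv1W, hk0, hrest⟩ := kill 0 hw0 a (-(n+1 : ℕ))
      have hlt : ∀ j, (a - v1) j ≠ 0 → j < d := by
        intro j hj
        rcases hrest j hj with h' | h'
        · exact (ha j h').2
        · push_cast at h'
          omega
      have hbnd : ∀ k, (a - v1) k ≠ 0 → -(n:ℤ) ≤ k ∧ k < d := by
        intro k hk
        have hkne : k ≠ -(n+1 : ℕ) := fun h => hk (h ▸ hk0)
        refine ⟨?_, hlt k hk⟩
        rcases hrest k hk with h | h
        · have := ha k h
          push_cast at this hkne ⊢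
          omega
        · push_cast at h hkne ⊢
          omega
      obtain ⟨v2, hv2W, hfin⟩ := ih (a - v1) hbnd
      refine ⟨v1 + v2, ?_, ?_⟩
      · rw [hofAdd_mul]; exact W.mul_mem hv1W hv2W
      · intro k hk
        rw [← sub_sub] at hk
        exact hfin k hk
  -- bounds on supports
  have bound_above : ∀ b : LampBase p 1, ∃ n : ℕ, ∀ k, b k ≠ 0 → k < d + n := by
    intro b
    rcases b.support.eq_empty_or_nonempty with hb | hb
    · exact ⟨0, fun k hk => absurd (Finsupp.mem_support_iff.mpr hk) (by rw [hb]; simp)⟩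
    · refine ⟨(b.support.max' hb - d + 1).toNat, fun k hk => ?_⟩
      have h1 := b.support.le_max' k (Finsupp.mem_support_iff.mpr hk)
      omega
  have bound_below : ∀ b : LampBase p 1, ∃ n : ℕ, ∀ k, b k ≠ 0 → -(n:ℤ) ≤ k := by
    intro b
    rcases b.support.eq_empty_or_nonempty with hb | hb
    · exact ⟨0, fun k hk => absurd (Finsupp.mem_support_iff.mpr hk) (by rw [hb]; simp)⟩
    · refine ⟨(-(b.support.min' hb)).toNat, fun k hk => ?_⟩
      have h1 := b.support.min'_le k (Finsupp.mem_support_iff.mpr hk)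
      omega
  -- full reduction
  have reduce : ∀ a : LampBase p 1,
      ∃ v, ofAdd v ∈ W ∧ ∀ k, (a - v) k ≠ 0 → 0 ≤ k ∧ k < d := by
    intro a
    obtain ⟨n1, hn1⟩ := bound_above a
    obtain ⟨v1, hv1W, h1⟩ := reduceTop n1 a hn1
    obtain ⟨n2, hn2⟩ := bound_below (a - v1)
    obtain ⟨v2, hv2W, h2⟩ := reduceBot n2 (a - v1) (fun k hk => ⟨hn2 k hk, h1 k hk⟩)
    refine ⟨v1 + v2, by rw [hofAdd_mul]; exact W.mul_mem hv1W hv2W, ?_⟩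
    intro k hk
    rw [← sub_sub] at hk
    exact h2 k hk
  -- the quotient is finite
  haveI hfinq : Finite (Multiplicative (LampBase p 1) ⧸ W) := by
    have hsurj : Function.Surjective
        (fun f : (↥(Finset.Ico (0:ℤ) d) → (Fin 1 → ZMod p)) =>
          (QuotientGroup.mk (ofAdd (∑ k ∈ (Finset.Ico (0:ℤ) d).attach,
            Finsupp.single (k : ℤ) (f k))) : Multiplicative (LampBase p 1) ⧸ W)) := by
      intro q
      obtain ⟨x, rfl⟩ := QuotientGroup.mk_surjective q
      obtain ⟨v, hvW, hsupp⟩ := reduce (toAdd x)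
      set r : LampBase p 1 := toAdd x - v with hr
      refine ⟨fun k => r k, ?_⟩
      have hrsum : (∑ k ∈ (Finset.Ico (0:ℤ) d).attach,
          Finsupp.single (k : ℤ) (r k)) = r := by
        rw [Finset.sum_attach (Finset.Ico (0:ℤ) d) (fun k => Finsupp.single k (r k))]
        have hsub : r.support ⊆ Finset.Ico 0 d := by
          intro k hk
          rw [Finset.mem_Ico]
          exact hsupp k (Finsupp.mem_support_iff.mp hk)
        rw [← Finset.sum_subset hsub (fun k _ hk => by
          rw [Finsupp.notMem_support_iff.mp hk, Finsupp.single_zero])]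
        exact Finsupp.sum_single r
      simp only
      rw [hrsum, QuotientGroup.eq]
      have : (ofAdd r)⁻¹ * x = ofAdd v := by
        rw [show x = ofAdd (toAdd x) from rfl, ← ofAdd_neg, ← ofAdd_add]
        congr 1
        rw [hr]
        abel
      rw [this]
      exact hvW
    exact Finite.of_surjective _ hsurj
  refine ⟨Subgroup.finiteIndex_of_finite_quotient, ?_⟩
  -- V is infinite
  haveI hinfA : Infinite (Multiplicative (LampBase p 1)) := by
    have : Infinite (LampBase p 1) := by infer_instance
    exact Infinite.of_injective (ofAdd) (fun a b h => by simpa using h)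
  haveI hinfW : Infinite ↥W := by
    rw [← not_finite_iff_infinite]
    intro hfin
    have : Finite (Multiplicative (LampBase p 1)) :=
      Finite.of_equiv _ (Subgroup.groupEquivQuotientProdSubgroup (s := W)).symm
    exact absurd this (by rw [not_finite_iff_infinite]; exact hinfA)
  exact Set.infinite_of_injective_forall_mem
    (f := fun u : ↥W => SemidirectProduct.inl (φ := lampAct p 1)
      (u : Multiplicative (LampBase p 1)))
    (fun a b hab => Subtype.ext (SemidirectProduct.inl_injective hab))
    (fun u => Subgroup.mem_comap.mp u.2)
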